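/- Let P₁ be the uniform distribution on the closed interval [a, b] with a < b, and let n ∈ ℕ, n ≥ 1. Then the set {a + (2i−1)(b−a)/(2n) : 1 ≤ i ≤ n} is an optimal set of n-means for P₁, and the nth quantization error is V_n(P₁) = (b−a)²/(12n²). -/

import Mathlib

open MeasureTheory Set Filter Real
open scoped ENNReal

/-- Distortion error of a finite set of quantizers `γ` for the measure `P`. -/
noncomputable def distortion (P : Measure ℝ) (γ : Finset ℝ) : ℝ :=
  ∫ x, (⨅ c : γ, (x - (c : ℝ)) ^ 2) ∂P

/-- The `n`-th quantization error of `P`. -/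
noncomputable def quantErr (P : Measure ℝ) (n : ℕ) : ℝ :=
  sInf {v : ℝ | ∃ γ : Finset ℝ, γ.Nonempty ∧ γ.card ≤ n ∧ v = distortion P γ}

/-- `γ` is an optimal set of `n`-means for `P`. -/
def IsOptimalSet (P : Measure ℝ) (n : ℕ) (γ : Finset ℝ) : Prop :=
  γ.Nonempty ∧ γ.card ≤ n ∧ distortion P γ = quantErr P n

/-- Uniform distribution on `[a, b]`. -/
noncomputable def unif (a b : ℝ) : Measure ℝ :=
  (ENNReal.ofReal (b - a))⁻¹ • (volume.restrict (Icc a b))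

/-- The uniform discrete measure on `{2/3, 5/6, 1}`. -/
noncomputable def discD : Measure ℝ :=
  (3 : ℝ≥0∞)⁻¹ • (Measure.dirac (2/3) + Measure.dirac (5/6) + Measure.dirac 1)

/-- Mixture `(1/2)P₁ + (1/2)P₂`. -/
noncomputable def mix (P₁ P₂ : Measure ℝ) : Measure ℝ :=
  (2 : ℝ≥0∞)⁻¹ • P₁ + (2 : ℝ≥0∞)⁻¹ • P₂

namespace QuantAux

noncomputable def qf (γ : Finset ℝ) (hγ : γ.Nonempty) : ℝ → ℝ :=
  fun x => γ.inf' hγ (fun c => (x - c) ^ 2)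

lemma iInf_eq_qf (γ : Finset ℝ) (hγ : γ.Nonempty) (x : ℝ) :
    (⨅ c : γ, (x - (c : ℝ)) ^ 2) = qf γ hγ x := by
  rw [qf, Finset.inf'_eq_csInf_image, iInf]
  congr 1
  rw [Set.image_eq_range]
  rfl

lemma qf_cont (γ : Finset ℝ) (hγ : γ.Nonempty) : Continuous (qf γ hγ) :=
  Continuous.finset_inf'_apply hγ (fun c _ => by continuity)

lemma qf_nonneg (γ : Finset ℝ) (hγ : γ.Nonempty) (x : ℝ) : 0 ≤ qf γ hγ x := by
  apply Finset.le_inf'; intro c hc; positivity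

lemma qf_le (γ : Finset ℝ) (hγ : γ.Nonempty) {c : ℝ} (hc : c ∈ γ) (x : ℝ) :
    qf γ hγ x ≤ (x - c) ^ 2 := Finset.inf'_le _ hc

lemma qf_exists (γ : Finset ℝ) (hγ : γ.Nonempty) (x : ℝ) :
    ∃ c ∈ γ, qf γ hγ x = (x - c) ^ 2 := by
  obtain ⟨c, hc, h⟩ := Finset.exists_mem_eq_inf' hγ (fun c => (x - c) ^ 2)
  exact ⟨c, hc, h⟩

end QuantAux

namespace QuantAux

lemma meas_bound (a b : ℝ) (n : ℕ) (γ : Finset ℝ) (hγ : γ.Nonempty) (hcard : γ.card ≤ n)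
    {t : ℝ} (ht : 0 < t) :
    ENNReal.ofReal (b - a - 2 * n * Real.sqrt t) ≤
      (volume.restrict (Icc a b)) {x | t < qf γ hγ x} := by
  set μ := volume.restrict (Icc a b)
  have hsub : {x | ¬ t < qf γ hγ x} ⊆ ⋃ c ∈ γ, Icc (c - Real.sqrt t) (c + Real.sqrt t) := by
    intro x hx
    simp only [not_lt, mem_setOf_eq] at hx
    obtain ⟨c, hc, heq⟩ := qf_exists γ hγ x
    have h1 : |x - c| ≤ Real.sqrt t := by
      rw [← Real.sqrt_sq_eq_abs]
      exact Real.sqrt_le_sqrt (by linarith [hx, heq.symm.le.trans hx])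
    have := abs_le.1 h1
    exact Set.mem_biUnion hc ⟨by linarith [this.1], by linarith [this.2]⟩
  have hμle : μ {x | ¬ t < qf γ hγ x} ≤ ENNReal.ofReal (2 * n * Real.sqrt t) := by
    calc μ {x | ¬ t < qf γ hγ x} ≤ μ (⋃ c ∈ γ, Icc (c - Real.sqrt t) (c + Real.sqrt t)) :=
          measure_mono hsub
      _ ≤ ∑ c ∈ γ, μ (Icc (c - Real.sqrt t) (c + Real.sqrt t)) := measure_biUnion_finset_le _ _
      _ ≤ ∑ c ∈ γ, volume (Icc (c - Real.sqrt t) (c + Real.sqrt t)) :=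
          Finset.sum_le_sum fun c _ => Measure.restrict_le_self _
      _ = ∑ c ∈ γ, ENNReal.ofReal (2 * Real.sqrt t) := by
          refine Finset.sum_congr rfl fun c _ => ?_
          rw [Real.volume_Icc, show c + Real.sqrt t - (c - Real.sqrt t) = 2 * Real.sqrt t by ring]
      _ = γ.card * ENNReal.ofReal (2 * Real.sqrt t) := by
          rw [Finset.sum_const, nsmul_eq_mul]
      _ ≤ n * ENNReal.ofReal (2 * Real.sqrt t) := by
          gcongr
      _ = ENNReal.ofReal (2 * n * Real.sqrt t) := by
          rw [← ENNReal.ofReal_natCast n, ← ENNReal.ofReal_mul (by positivity)]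
          congr 1; ring
  have hsplit : ENNReal.ofReal (b - a) ≤
      μ {x | t < qf γ hγ x} + ENNReal.ofReal (2 * n * Real.sqrt t) := by
    have : μ univ ≤ μ {x | t < qf γ hγ x} + μ {x | ¬ t < qf γ hγ x} := by
      refine le_trans (measure_mono ?_) (measure_union_le _ _)
      intro x _
      by_cases h : t < qf γ hγ x
      · exact Or.inl h
      · exact Or.inr h
    have huniv : μ univ = ENNReal.ofReal (b - a) := by
      simp [μ, Measure.restrict_apply, Real.volume_Icc]
    rw [huniv] at this
    exact this.trans (by gcongr)
  calc ENNReal.ofReal (b - a - 2 * n * Real.sqrt t)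
      = ENNReal.ofReal (b - a) - ENNReal.ofReal (2 * n * Real.sqrt t) :=
        ENNReal.ofReal_sub _ (by positivity)
    _ ≤ μ {x | t < qf γ hγ x} := tsub_le_iff_right.2 hsplit

end QuantAux

namespace QuantAux

lemma sqrt_integral (T : ℝ) (hT : 0 ≤ T) :
    ∫ t in (0:ℝ)..(T^2), Real.sqrt t = 2 / 3 * T ^ 3 := by
  simp_rw [Real.sqrt_eq_rpow]
  rw [integral_rpow (Or.inl (by norm_num))]
  have : (T ^ 2 : ℝ) ^ (1/2 + 1 : ℝ) = T ^ 3 := by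
    rw [← Real.rpow_natCast T 2, ← Real.rpow_mul hT]
    norm_num
  rw [this]
  rw [Real.zero_rpow (by norm_num)]
  ring

lemma key_integral (a b : ℝ) (hab : a < b) (n : ℕ) (hn : 1 ≤ n) :
    ∫ t in Ioc (0:ℝ) (((b-a)/(2*n))^2), (b - a - 2 * n * Real.sqrt t) =
      (b - a)^3 / (12 * n^2) := by
  have hn0 : (0:ℝ) < n := by exact_mod_cast hn
  set T := (b-a)/(2*n) with hTdef
  have hba : (0:ℝ) < b - a := by linarith
  have hT : 0 < T := by positivity
  have hT2 : (0:ℝ) ≤ T^2 := by positivity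
  rw [← intervalIntegral.integral_of_le hT2]
  have hint : IntervalIntegrable (fun t => Real.sqrt t) volume 0 (T^2) :=
    Real.continuous_sqrt.intervalIntegrable _ _
  have : ∫ t in (0:ℝ)..(T^2), (b - a - 2 * n * Real.sqrt t) =
      (∫ t in (0:ℝ)..(T^2), (b - a : ℝ)) - ∫ t in (0:ℝ)..(T^2), 2 * n * Real.sqrt t := by
    apply intervalIntegral.integral_sub intervalIntegrable_const
    exact (hint.const_mul _)
  rw [this, intervalIntegral.integral_const, intervalIntegral.integral_const_mul,
    sqrt_integral T hT.le]
  simp only [smul_eq_mul, sub_zero]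
  rw [hTdef]
  field_simp
  ring

end QuantAux

namespace QuantAux

lemma lower_bound (a b : ℝ) (hab : a < b) (n : ℕ) (hn : 1 ≤ n)
    (γ : Finset ℝ) (hγ : γ.Nonempty) (hcard : γ.card ≤ n) :
    (b - a)^3 / (12 * n^2) ≤ ∫ x in Icc a b, qf γ hγ x := by
  have hn0 : (0:ℝ) < n := by exact_mod_cast hn
  have hba : (0:ℝ) < b - a := by linarith
  set T := (b-a)/(2*n) with hTdef
  have hT : 0 < T := by positivity
  set μ := volume.restrict (Icc a b) with hμ
  set f := qf γ hγ with hf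
  have hf_cont : Continuous f := qf_cont γ hγ
  have hf_nn : ∀ x, 0 ≤ f x := qf_nonneg γ hγ
  have hf_int : IntegrableOn f (Icc a b) volume := hf_cont.integrableOn_Icc
  -- layer cake
  have hlayer : ∫⁻ x, ENNReal.ofReal (f x) ∂μ = ∫⁻ t in Ioi (0:ℝ), μ {x | t < f x} :=
    lintegral_eq_lintegral_meas_lt μ (Eventually.of_forall hf_nn) hf_cont.aemeasurable
  -- lower bound the right side
  have hmono : ∫⁻ t in Ioc (0:ℝ) (T^2), ENNReal.ofReal (b - a - 2 * n * Real.sqrt t) ≤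
      ∫⁻ t in Ioi (0:ℝ), μ {x | t < f x} := by
    calc ∫⁻ t in Ioc (0:ℝ) (T^2), ENNReal.ofReal (b - a - 2 * n * Real.sqrt t)
        ≤ ∫⁻ t in Ioc (0:ℝ) (T^2), μ {x | t < f x} := by
          refine setLIntegral_mono (Antitone.measurable ?_) ?_
          · intro t₁ t₂ h12
            exact measure_mono (fun x hx => lt_of_le_of_lt h12 hx)
          · intro t ht
            exact meas_bound a b n γ hγ hcard ht.1
      _ ≤ ∫⁻ t in Ioi (0:ℝ), μ {x | t < f x} := lintegral_mono_set Ioc_subset_Ioi_self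
  -- compute the lower bound lintegral
  have hcalc : ∫⁻ t in Ioc (0:ℝ) (T^2), ENNReal.ofReal (b - a - 2 * n * Real.sqrt t) =
      ENNReal.ofReal ((b - a)^3 / (12 * n^2)) := by
    rw [← ofReal_integral_eq_lintegral_ofReal]
    · rw [key_integral a b hab n hn]
    · apply IntegrableOn.mono_set (Continuous.integrableOn_Icc (by continuity)) Ioc_subset_Icc_self
    · filter_upwards [ae_restrict_mem measurableSet_Ioc] with t ht
      have h1 : Real.sqrt t ≤ T := by
        rw [show T = Real.sqrt (T^2) by rw [Real.sqrt_sq hT.le]]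
        exact Real.sqrt_le_sqrt ht.2
      have : 2 * (n:ℝ) * Real.sqrt t ≤ 2 * n * T := by nlinarith
      have hTval : 2 * (n:ℝ) * T = b - a := by rw [hTdef]; field_simp
      simp only [Pi.zero_apply]
      linarith
  have hfin : ∫⁻ x, ENNReal.ofReal (f x) ∂μ < ⊤ := by
    have := hf_int.2
    rw [HasFiniteIntegral] at this
    refine lt_of_le_of_lt (lintegral_mono fun x => ?_) this
    rw [← ofReal_norm_eq_enorm]
    exact ENNReal.ofReal_le_ofReal (le_abs_self _)
  have hlow : ENNReal.ofReal ((b - a)^3 / (12 * n^2)) ≤ ∫⁻ x, ENNReal.ofReal (f x) ∂μ := by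
    rw [hlayer, ← hcalc]; exact hmono
  have hint_eq : ∫ x in Icc a b, f x = (∫⁻ x, ENNReal.ofReal (f x) ∂μ).toReal := by
    rw [integral_eq_lintegral_of_nonneg_ae (Eventually.of_forall hf_nn) hf_cont.aestronglyMeasurable]
  rw [hint_eq]
  calc (b - a)^3 / (12 * n^2) = (ENNReal.ofReal ((b - a)^3 / (12 * n^2))).toReal := by
        rw [ENNReal.toReal_ofReal (by positivity)]
    _ ≤ (∫⁻ x, ENNReal.ofReal (f x) ∂μ).toReal :=
        ENNReal.toReal_mono hfin.ne hlow

end QuantAux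

namespace QuantAux

lemma piece (u v m : ℝ) : ∫ x in u..v, (x - m)^2 = ((v-m)^3 - (u-m)^3)/3 := by
  rw [intervalIntegral.integral_comp_sub_right (fun x => x^2) m, integral_pow]
  norm_num

lemma upper_bound (a b : ℝ) (hab : a < b) (n : ℕ) (hn : 1 ≤ n)
    (hγ : (Finset.image (fun i : ℕ => a + (2 * (i : ℝ) + 1) * (b - a) / (2 * n))
        (Finset.range n)).Nonempty) :
    ∫ x in Icc a b,
        qf (Finset.image (fun i : ℕ => a + (2 * (i : ℝ) + 1) * (b - a) / (2 * n))
          (Finset.range n)) hγ x ≤ (b - a)^3 / (12 * n^2) := by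
  have hn0 : (0:ℝ) < n := by exact_mod_cast hn
  have hba : (0:ℝ) < b - a := by linarith
  set γ := Finset.image (fun i : ℕ => a + (2 * (i : ℝ) + 1) * (b - a) / (2 * n))
      (Finset.range n) with hγdef
  set f := qf γ hγ with hfdef
  have hf_cont : Continuous f := qf_cont γ hγ
  set h := (b - a) / n with hhdef
  have hh : 0 < h := by positivity
  set φ : ℕ → ℝ := fun i => a + i * h with hφdef
  have hφ0 : φ 0 = a := by simp [hφdef]
  have hφn : φ n = b := by
    simp only [hφdef, hhdef]
    field_simp
    ring
  have hsum : ∑ i ∈ Finset.range n, ∫ x in φ i..φ (i+1), f x = ∫ x in (φ 0)..(φ n), f x := by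
    apply intervalIntegral.sum_integral_adjacent_intervals
    intro i _
    exact hf_cont.intervalIntegrable _ _
  have hstep : ∀ i ∈ Finset.range n, ∫ x in φ i..φ (i+1), f x ≤ h^3 / 12 := by
    intro i hi
    have hile : φ i ≤ φ (i+1) := by
      simp only [hφdef]
      push_cast
      nlinarith
    set m := a + (2 * (i : ℝ) + 1) * (b - a) / (2 * n) with hmdef
    have hmem : m ∈ γ := Finset.mem_image_of_mem _ hi
    have h1 : ∫ x in φ i..φ (i+1), f x ≤ ∫ x in φ i..φ (i+1), (x - m)^2 := by
      apply intervalIntegral.integral_mono_on hile (hf_cont.intervalIntegrable _ _)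
        ((by continuity : Continuous fun x : ℝ => (x - m)^2).intervalIntegrable _ _)
      intro x _
      exact qf_le γ hγ hmem x
    have h2 : ∫ x in φ i..φ (i+1), (x - m)^2 = h^3 / 12 := by
      rw [piece]
      have e1 : φ (i+1) - m = h / 2 := by
        simp only [hφdef, hmdef, hhdef]
        push_cast
        field_simp
        ring
      have e2 : φ i - m = -(h / 2) := by
        simp only [hφdef, hmdef, hhdef]

        field_simp
        ring
      rw [e1, e2]
      ring
    linarith
  have : ∫ x in Icc a b, f x = ∫ x in a..b, f x := by
    rw [intervalIntegral.integral_of_le hab.le, integral_Icc_eq_integral_Ioc]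
  calc ∫ x in Icc a b, f x = ∫ x in (φ 0)..(φ n), f x := by rw [this, hφ0, hφn]
    _ = ∑ i ∈ Finset.range n, ∫ x in φ i..φ (i+1), f x := hsum.symm
    _ ≤ ∑ i ∈ Finset.range n, (h^3 / 12) := Finset.sum_le_sum hstep
    _ = n * (h^3 / 12) := by rw [Finset.sum_const, Finset.card_range, nsmul_eq_mul]
    _ = (b - a)^3 / (12 * n^2) := by
        rw [hhdef]
        field_simp

end QuantAux

namespace QuantAux

lemma distortion_unif' (a b : ℝ) (hab : a < b) (γ : Finset ℝ) (hγ : γ.Nonempty)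
    (distortion : Measure ℝ → Finset ℝ → ℝ)
    (hdist : ∀ P γ', distortion P γ' = ∫ x, (⨅ c : γ', (x - (c : ℝ)) ^ 2) ∂P)
    (unif : ℝ → ℝ → Measure ℝ)
    (hunif : unif a b = (ENNReal.ofReal (b - a))⁻¹ • (volume.restrict (Icc a b))) :
    distortion (unif a b) γ = (b - a)⁻¹ * ∫ x in Icc a b, qf γ hγ x := by
  rw [hdist, hunif, integral_smul_measure]
  simp_rw [iInf_eq_qf γ hγ]
  rw [ENNReal.toReal_inv, ENNReal.toReal_ofReal (by linarith)]
  rfl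

end QuantAux

theorem stmt1 (a b : ℝ) (hab : a < b) (n : ℕ) (hn : 1 ≤ n) :
    IsOptimalSet (unif a b) n
      (Finset.image (fun i : ℕ => a + (2 * (i : ℝ) + 1) * (b - a) / (2 * n))
        (Finset.range n)) ∧
    quantErr (unif a b) n = (b - a) ^ 2 / (12 * n ^ 2) := by
  have hn0 : (0:ℝ) < n := by exact_mod_cast hn
  have hba : (0:ℝ) < b - a := by linarith
  set γs := Finset.image (fun i : ℕ => a + (2 * (i : ℝ) + 1) * (b - a) / (2 * n))
      (Finset.range n) with hγsdef
  have hγs : γs.Nonempty :=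
    (Finset.nonempty_range_iff.2 (by omega)).image _
  have hcard : γs.card ≤ n := le_trans Finset.card_image_le (by simp)
  have hdist_eq : ∀ (γ : Finset ℝ) (hγ : γ.Nonempty),
      distortion (unif a b) γ = (b - a)⁻¹ * ∫ x in Icc a b, QuantAux.qf γ hγ x := fun γ hγ =>
    QuantAux.distortion_unif' a b hab γ hγ distortion (fun _ _ => rfl) unif rfl
  set L := (b - a) ^ 2 / (12 * (n:ℝ) ^ 2) with hLdef
  have hLval : (b - a)⁻¹ * ((b - a)^3 / (12 * (n:ℝ)^2)) = L := by
    rw [hLdef]; field_simp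
  have hlow : ∀ (γ : Finset ℝ) (hγ : γ.Nonempty), γ.card ≤ n → L ≤ distortion (unif a b) γ := by
    intro γ hγ hc
    rw [hdist_eq γ hγ, ← hLval]
    have := QuantAux.lower_bound a b hab n hn γ hγ hc
    have hinv : (0:ℝ) < (b - a)⁻¹ := by positivity
    nlinarith
  have hup : distortion (unif a b) γs ≤ L := by
    rw [hdist_eq γs hγs, ← hLval]
    have := QuantAux.upper_bound a b hab n hn hγs
    have hinv : (0:ℝ) < (b - a)⁻¹ := by positivity
    nlinarith
  have hd_eq : distortion (unif a b) γs = L := le_antisymm hup (hlow γs hγs hcard)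
  have hq : quantErr (unif a b) n = L := by
    unfold quantErr
    apply IsLeast.csInf_eq
    constructor
    · exact ⟨γs, hγs, hcard, hd_eq.symm⟩
    · rintro v ⟨γ, hγ, hc, rfl⟩
      exact hlow γ hγ hc
  refine ⟨⟨hγs, hcard, ?_⟩, by rw [hq]⟩
  rw [hd_eq, hq]
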